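/- Let s ∈ {−1, 1}, k > 0, and set c = s·k. Let ψ₀ ∈ (0,1) and λ ∈ ℝ with λ ≠ 0. Then the discriminant D = (λ + 1/c)² − 4λψ₀/c is nonnegative, and y = (λ + 1/c − s·√D)/(2λ) is the unique element of the open interval (0,1) satisfying the quadratic equation λ·c·y² − (1 + λ·c)·y + ψ₀ = 0. -/
import Mathlib

lemma quad_key (a ψ₀ q : ℝ) (ha : a ≠ 0) (h0 : 0 < ψ₀) (h1 : ψ₀ < 1)
    (hq0 : 0 ≤ q) (hq2 : q ^ 2 = (1 + a) ^ 2 - 4 * a * ψ₀) :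
    ((1 + a - q) / (2 * a)) ∈ Set.Ioo (0 : ℝ) 1 ∧
    a * ((1 + a - q) / (2 * a)) ^ 2 - (1 + a) * ((1 + a - q) / (2 * a)) + ψ₀ = 0 ∧
    ∀ z ∈ Set.Ioo (0 : ℝ) 1,
      a * z ^ 2 - (1 + a) * z + ψ₀ = 0 → z = (1 + a - q) / (2 * a) := by
  set y : ℝ := (1 + a - q) / (2 * a) with hy
  have hyeq : 2 * a * y = 1 + a - q := by
    rw [hy]; field_simp
  have heq : a * y ^ 2 - (1 + a) * y + ψ₀ = 0 := by
    rw [hy]; field_simp; ring_nf; nlinarith [hq2]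
  have hmem : y ∈ Set.Ioo (0 : ℝ) 1 := by
    rcases lt_or_gt_of_ne ha with hneg | hpos
    · constructor
      · have hnum : 1 + a - q < 0 := by nlinarith
        rw [hy]
        exact div_pos_iff.2 (Or.inr ⟨by nlinarith, by nlinarith⟩)
      · nlinarith [hyeq]
    · have hq1 : 1 - a < q := by nlinarith [hq2, mul_pos hpos (sub_pos.2 h1)]
      constructor
      · have hnum : 0 < 1 + a - q := by nlinarith
        exact div_pos hnum (by nlinarith)
      · rw [hy, div_lt_one (by nlinarith)]; nlinarith
  refine ⟨hmem, heq, ?_⟩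
  intro z hz hzeq
  have hfac : (z - y) * (a * (z + y) - (1 + a)) = 0 := by
    linear_combination hzeq - heq
  rcases mul_eq_zero.1 hfac with h | h
  · linarith [sub_eq_zero.1 h]
  · exfalso
    have hz2 : 2 * a * z = 1 + a + q := by nlinarith [hyeq, h]
    rcases lt_or_gt_of_ne ha with hneg | hpos
    · nlinarith [hz.1, hz2]
    · have hq1' : a - 1 < q := by nlinarith [hq2, mul_pos hpos h0]
      nlinarith [hz.2, hz2]

/-- Under cross-entropy risk, the stationarity equation
`λ c y² - (1 + λ c) y + ψ₀ = 0` has a nonnegative discriminant and exactly one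
solution `y` in `(0,1)`, given in closed form; here `c = s·k` with sign
`s ∈ {-1, 1}` and magnitude `k > 0`. -/
theorem cross_entropy_quadratic_unique_root
    (s k : ℝ) (hs : s = -1 ∨ s = 1) (hk : 0 < k)
    (c : ℝ) (hc : c = s * k)
    (ψ₀ : ℝ) (hψ₀ : ψ₀ ∈ Set.Ioo (0 : ℝ) 1)
    (lam : ℝ) (hlam : lam ≠ 0) :
    0 ≤ (lam + 1 / c) ^ 2 - 4 * lam * ψ₀ / c ∧
    (let D : ℝ := (lam + 1 / c) ^ 2 - 4 * lam * ψ₀ / c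
     let y : ℝ := (lam + 1 / c - s * Real.sqrt D) / (2 * lam)
     y ∈ Set.Ioo (0 : ℝ) 1 ∧
     lam * c * y ^ 2 - (1 + lam * c) * y + ψ₀ = 0 ∧
     ∀ z ∈ Set.Ioo (0 : ℝ) 1,
       lam * c * z ^ 2 - (1 + lam * c) * z + ψ₀ = 0 → z = y) := by
  obtain ⟨hψ1, hψ2⟩ := hψ₀
  have hcne : c ≠ 0 := by
    rcases hs with rfl | rfl <;> rw [hc] <;> intro h <;> nlinarith
  have hsc : s * c = k := by
    rcases hs with rfl | rfl <;> rw [hc] <;> ring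
  have hc2 : c ^ 2 = k ^ 2 := by
    rcases hs with rfl | rfl <;> rw [hc] <;> ring
  set a : ℝ := lam * c with haa
  have hane : a ≠ 0 := mul_ne_zero hlam hcne
  set D : ℝ := (lam + 1 / c) ^ 2 - 4 * lam * ψ₀ / c with hD
  have hDid : D * c ^ 2 = (1 + a) ^ 2 - 4 * a * ψ₀ := by
    rw [hD, haa]; field_simp; ring
  have hDqpos : 0 < (1 + a) ^ 2 - 4 * a * ψ₀ := by
    rcases lt_or_gt_of_ne hane with hneg | hpos
    · nlinarith [sq_nonneg (1 + a)]
    · nlinarith [sq_nonneg (1 - a)]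
  have hc2pos : (0:ℝ) < c ^ 2 := by positivity
  have hDpos : 0 < D := by
    by_contra h
    push_neg at h
    nlinarith [hDid]
  set r : ℝ := Real.sqrt D with hr
  have hr0 : 0 ≤ r := Real.sqrt_nonneg D
  have hr2 : r ^ 2 = D := Real.sq_sqrt hDpos.le
  set q : ℝ := k * r with hq
  have hq0 : 0 ≤ q := mul_nonneg hk.le hr0
  have hq2 : q ^ 2 = (1 + a) ^ 2 - 4 * a * ψ₀ := by
    rw [hq]
    have : (k * r) ^ 2 = k ^ 2 * D := by rw [mul_pow, hr2]
    rw [this, ← hc2, ← hDid]; ring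
  have hyform : (lam + 1 / c - s * r) / (2 * lam) = (1 + a - q) / (2 * a) := by
    rw [haa, hq, ← hsc]
    field_simp
    ring
  obtain ⟨hmem, heq, huniq⟩ := quad_key a ψ₀ q hane hψ1 hψ2 hq0 hq2
  refine ⟨hDpos.le, ?_⟩
  simp only
  rw [hyform]
  exact ⟨hmem, by linear_combination heq, fun z hz hzeq => huniq z hz (by linear_combination hzeq)⟩
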